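/- The automorphism group of a finite tree in which every vertex has degree at most 4 is a solvable group whose order is of the form 2^j·3^k. -/

import Mathlib

open Equiv Equiv.Perm

private def k4c : Set (Perm (Fin 4)) :=
  {1, swap 0 1 * swap 2 3, swap 0 2 * swap 1 3, swap 0 3 * swap 1 2}

private lemma k4c_dec : ∀ x : Perm (Fin 4), x ∈ k4c ↔
    (x = 1 ∨ x = swap 0 1 * swap 2 3 ∨ x = swap 0 2 * swap 1 3 ∨ x = swap 0 3 * swap 1 2) := by
  intro x; simp [k4c]

private def K4 : Subgroup (Perm (Fin 4)) where
  carrier := k4c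
  one_mem' := by rw [k4c_dec]; decide
  mul_mem' := by
    intro a b ha hb
    rw [k4c_dec] at *
    revert ha hb; revert a b; decide
  inv_mem' := by
    intro a ha
    rw [k4c_dec] at *
    revert ha; revert a; decide

private lemma K4_conj : ∀ n g : Perm (Fin 4),
    (n = 1 ∨ n = swap 0 1 * swap 2 3 ∨ n = swap 0 2 * swap 1 3 ∨ n = swap 0 3 * swap 1 2) →
    (g * n * g⁻¹ = 1 ∨ g * n * g⁻¹ = swap 0 1 * swap 2 3 ∨
      g * n * g⁻¹ = swap 0 2 * swap 1 3 ∨ g * n * g⁻¹ = swap 0 3 * swap 1 2) := by decide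

private instance K4_normal : K4.Normal := by
  constructor
  intro n hn g
  have hn' := (k4c_dec n).1 hn
  show _ ∈ k4c
  rw [k4c_dec]
  exact K4_conj n g hn'


private lemma K4_comm : ∀ a b : Perm (Fin 4), a ∈ k4c → b ∈ k4c → a * b = b * a := by
  intro a b ha hb
  rw [k4c_dec] at ha hb
  revert ha hb; revert a b; decide

private instance : DecidablePred (· ∈ K4) := fun x =>
  decidable_of_iff _ (k4c_dec x).symm

private def K4A : Subgroup (alternatingGroup (Fin 4)) := K4.subgroupOf (alternatingGroup (Fin 4))

private instance : DecidablePred (· ∈ K4A) := fun x =>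
  decidable_of_iff (x.1 ∈ K4) (Subgroup.mem_subgroupOf (H := K4)).symm

private instance : Fintype K4A := Subtype.fintype _

private lemma A4_solvable : Group.IsSolvable (alternatingGroup (Fin 4)) := by
  haveI : K4A.Normal := K4_normal.subgroupOf _
  have hcard4 : Nat.card K4A = 4 := by
    rw [Nat.card_eq_fintype_card]; decide
  have hcardA : Nat.card (alternatingGroup (Fin 4)) = 12 := by
    rw [Nat.card_eq_fintype_card]; decide
  have hcard3 : Nat.card (alternatingGroup (Fin 4) ⧸ K4A) = 3 := by
    have := Subgroup.card_eq_card_quotient_mul_card_subgroup K4A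
    rw [hcard4, hcardA] at this
    omega
  haveI : Fact (Nat.Prime 3) := ⟨by norm_num⟩
  haveI : IsCyclic (alternatingGroup (Fin 4) ⧸ K4A) := isCyclic_of_prime_card hcard3
  haveI : Group.IsSolvable (alternatingGroup (Fin 4) ⧸ K4A) := by
    letI := IsCyclic.commGroup (α := alternatingGroup (Fin 4) ⧸ K4A)
    infer_instance
  haveI : Group.IsSolvable K4A := by
    apply isSolvable_of_comm
    rintro ⟨a, ha⟩ ⟨b, hb⟩
    exact Subtype.ext (Subtype.ext (K4_comm a.1 b.1
      ((Subgroup.mem_subgroupOf).1 ha) ((Subgroup.mem_subgroupOf).1 hb)))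
  exact solvable_of_ker_le_range K4A.subtype (QuotientGroup.mk' K4A)
    (by rw [Subgroup.range_subtype, QuotientGroup.ker_mk'])

private lemma S4_solvable : Group.IsSolvable (Perm (Fin 4)) := by
  haveI := A4_solvable
  exact solvable_of_ker_le_range (alternatingGroup (Fin 4)).subtype Perm.sign
    (by rw [Subgroup.range_subtype]; exact le_of_eq rfl)

private lemma perm_solvable {X : Type*} [Fintype X] (h : Fintype.card X ≤ 4) :
    Group.IsSolvable (Perm X) := by
  classical
  obtain ⟨f⟩ : Nonempty (X ↪ Fin 4) := Function.Embedding.nonempty_of_card_le (by simpa using h)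
  haveI := S4_solvable
  exact solvable_of_solvable_injective (Perm.viaEmbeddingHom_injective f)

private lemma perm_card_dvd {X : Type*} [Fintype X] (h : Fintype.card X ≤ 4) :
    Nat.card (Perm X) ∣ 24 := by
  classical
  rw [Nat.card_eq_fintype_card, Fintype.card_perm]
  have : (24 : ℕ) = (4 : ℕ).factorial := by norm_num [Nat.factorial]
  rw [this]
  exact Nat.factorial_dvd_factorial h

private lemma derivedSeries_bot_mono {G : Type*} [Group G] {n m : ℕ}
    (h : derivedSeries G n = ⊥) (hnm : n ≤ m) : derivedSeries G m = ⊥ := by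
  obtain ⟨k, rfl⟩ := Nat.exists_eq_add_of_le hnm
  induction k with
  | zero => exact h
  | succ k ih =>
    rw [← Nat.add_assoc, derivedSeries_succ, ih (Nat.le_add_right n k),
      Subgroup.commutator_bot_left]

private lemma pi_solvable {ι : Type*} [Finite ι] (G : ι → Type*) [∀ i, Group (G i)]
    [∀ i, Group.IsSolvable (G i)] : Group.IsSolvable (∀ i, G i) := by
  have h : ∀ i, ∃ n, derivedSeries (G i) n = ⊥ := fun i => (inferInstance : Group.IsSolvable (G i)).1
  choose N hN using h
  cases isEmpty_or_nonempty ι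
  · exact isSolvable_of_comm (fun a b => funext (fun i => isEmptyElim i))
  haveI : Fintype ι := Fintype.ofFinite ι
  refine ⟨⟨Finset.univ.sup N, ?_⟩⟩
  rw [eq_bot_iff]
  intro x hx
  have hxi : ∀ i, x i = 1 := by
    intro i
    have h1 : (Pi.evalMonoidHom G i) x ∈ (derivedSeries (∀ j, G j) (Finset.univ.sup N)).map
        (Pi.evalMonoidHom G i) := Subgroup.mem_map_of_mem _ hx
    have h2 := map_derivedSeries_le_derivedSeries (Pi.evalMonoidHom G i) (Finset.univ.sup N) h1
    have h3 : derivedSeries (G i) (Finset.univ.sup N) = ⊥ :=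
      derivedSeries_bot_mono (hN i) (Finset.le_sup (Finset.mem_univ i))
    rw [h3] at h2
    exact h2
  exact Subgroup.mem_bot.2 (funext hxi)

private lemma two_three_pow : ∀ n : ℕ, n ≠ 0 →
    (∀ p : ℕ, p.Prime → p ∣ n → p = 2 ∨ p = 3) → ∃ j k : ℕ, n = 2 ^ j * 3 ^ k := by
  intro n
  induction n using Nat.strong_induction_on with
  | _ n ih =>
    intro hn h
    rcases eq_or_ne n 1 with rfl | h1
    · exact ⟨0, 0, rfl⟩
    · have hp : n.minFac.Prime := Nat.minFac_prime h1
      have hpd : n.minFac ∣ n := Nat.minFac_dvd n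
      have hlt : n / n.minFac < n := Nat.div_lt_self (Nat.pos_of_ne_zero hn) hp.one_lt
      have hne : n / n.minFac ≠ 0 := by
        intro h0
        rw [Nat.div_eq_zero_iff] at h0
        have := hp.two_le
        exact absurd (Nat.le_of_dvd (Nat.pos_of_ne_zero hn) hpd) (by omega)
      obtain ⟨j, k, hjk⟩ := ih _ hlt hne (fun p hp' hd => h p hp' (hd.trans (Nat.div_dvd_of_dvd hpd)))
      have hn' : n = n.minFac * (n / n.minFac) := (Nat.mul_div_cancel' hpd).symm
      rcases h n.minFac hp hpd with h2 | h3
      · exact ⟨j + 1, k, by rw [hn', hjk, h2]; ring⟩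
      · exact ⟨j, k + 1, by rw [hn', hjk, h3]; ring⟩

/-- The automorphism group of a simple graph `T`, as a subgroup of the permutation
group of its vertex set. -/
def graphAut {V : Type*} (T : SimpleGraph V) : Subgroup (Equiv.Perm V) where
  carrier := {e | ∀ u v, T.Adj (e u) (e v) ↔ T.Adj u v}
  one_mem' := by intro u v; simp
  mul_mem' := by
    intro a b ha hb u v
    simp only [Equiv.Perm.mul_apply]
    rw [ha, hb]
  inv_mem' := by
    intro a ha u v
    have := ha (a⁻¹ u) (a⁻¹ v)
    simpa using this.symm

open SimpleGraph

section GraphLemmas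

variable {V : Type*} [Fintype V] (T : SimpleGraph V) [DecidableRel T.Adj]

private lemma aut_degree_eq (g : Equiv.Perm V) (hg : g ∈ graphAut T) (v : V) :
    T.degree (g v) = T.degree v := by
  classical
  have himg : T.neighborFinset (g v) = (T.neighborFinset v).image g := by
    ext w
    simp only [mem_neighborFinset, Finset.mem_image]
    constructor
    · intro h
      refine ⟨g⁻¹ w, (hg v (g⁻¹ w)).1 (by rwa [← Equiv.Perm.mul_apply, mul_inv_cancel, Equiv.Perm.one_apply]),
        Equiv.apply_symm_apply g w⟩
    · rintro ⟨u, hu, rfl⟩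
      exact (hg v u).2 hu
  rw [← card_neighborFinset_eq_degree, ← card_neighborFinset_eq_degree, himg,
    Finset.card_image_of_injective _ g.injective]

private lemma two_le_degree_of {v a b : V} (hab : a ≠ b) (ha : T.Adj v a) (hb : T.Adj v b) :
    2 ≤ T.degree v := by
  classical
  have hsub : ({a, b} : Finset V) ⊆ T.neighborFinset v := by
    intro x hx
    rcases Finset.mem_insert.1 hx with rfl | hx
    · simpa using ha
    · rw [Finset.mem_singleton] at hx; subst hx; simpa using hb
  have h2 := Finset.card_le_card hsub
  rw [Finset.card_insert_of_notMem (by simpa using hab), Finset.card_singleton] at h2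
  rwa [card_neighborFinset_eq_degree] at h2

private lemma nbr_unique {w a b : V} (hw : T.degree w ≤ 1) (ha : T.Adj w a) (hb : T.Adj w b) :
    a = b := by
  by_contra hab
  have := two_le_degree_of T hab ha hb
  omega

private lemma support_mem_S {u v : V} (p : T.Walk u v) :
    2 ≤ T.degree v → p.IsPath → ∀ x ∈ p.support, x = u ∨ 2 ≤ T.degree x := by
  induction p with
  | nil =>
    intro _ _ x hx
    rw [Walk.support_nil, List.mem_singleton] at hx
    exact Or.inl hx
  | @cons a c v' hac q ih =>
    intro hv hp x hx
    rw [Walk.support_cons, List.mem_cons] at hx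
    rcases hx with rfl | hx
    · exact Or.inl rfl
    · right
      have hq : q.IsPath := hp.of_cons
      have hanotin : a ∉ q.support := ((Walk.cons_isPath_iff hac q).1 hp).2
      rcases ih hv hq x hx with rfl | hdeg
      · cases q with
        | nil => exact hv
        | @cons _ d _ hcd r =>
          have hd : d ∈ (Walk.cons hcd r).support := by
            rw [Walk.support_cons]
            exact List.mem_cons_of_mem _ r.start_mem_support
          have hne : a ≠ d := by
            intro h
            subst h
            exact hanotin hd
          exact two_le_degree_of T hne hac.symm hcd
      · exact hdeg

private lemma reachable_induce {S : Set V} : ∀ {u v : V} (p : T.Walk u v),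
    (∀ x ∈ p.support, x ∈ S) → ∀ (hu : u ∈ S) (hv : v ∈ S),
    (T.induce S).Reachable ⟨u, hu⟩ ⟨v, hv⟩ := by
  intro u v p
  induction p with
  | nil => intro _ hu hv; exact Reachable.refl _
  | @cons a c v' hac q ih =>
    intro hs hu hv
    have hc : c ∈ S := hs c (by rw [Walk.support_cons]; exact List.mem_cons_of_mem _ q.start_mem_support)
    have hadj : (T.induce S).Adj ⟨a, hu⟩ ⟨c, hc⟩ := by
      rw [comap_adj]
      exact hac
    exact hadj.reachable.trans (ih (fun x hx => hs x (by rw [Walk.support_cons]; exact List.mem_cons_of_mem _ hx)) hc hv)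

private lemma exists_small_degree (hT : T.IsTree) :
    ∃ w : V, T.degree w ≤ 1 := by
  classical
  by_contra h
  push_neg at h
  have hsum := T.sum_degrees_eq_twice_card_edges
  have hedge : T.edgeFinset.card + 1 = Fintype.card V := hT.card_edgeFinset
  have hge : 2 * Fintype.card V ≤ ∑ v, T.degree v := by
    calc 2 * Fintype.card V = ∑ _v : V, 2 := by
          rw [Finset.sum_const, Finset.card_univ, smul_eq_mul, mul_comm]
      _ ≤ ∑ v, T.degree v := Finset.sum_le_sum (fun v _ => h v)
  have hpos : 0 < Fintype.card V := Fintype.card_pos_iff.2 hT.isConnected.nonempty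
  omega

private lemma exists_adj (hT : T.IsTree) (h2 : 2 ≤ Fintype.card V) (w : V) :
    ∃ v, T.Adj w v := by
  obtain ⟨u, hu⟩ := Fintype.exists_ne_of_one_lt_card (by omega) w
  obtain ⟨p⟩ := hT.isConnected.preconnected w u
  cases p with
  | nil => exact absurd rfl hu.symm
  | cons h q => exact ⟨_, h⟩

private lemma closed_pair {w v : V} (hw : T.degree w ≤ 1) (hv : T.degree v ≤ 1)
    (hwv : T.Adj w v) : ∀ {y x : V} (p : T.Walk y x), (y = w ∨ y = v) → (x = w ∨ x = v) := by
  intro y x p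
  induction p with
  | nil => exact id
  | @cons a c x' hac q ih =>
    rintro (rfl | rfl)
    · exact ih (Or.inr (nbr_unique T hw hac hwv))
    · exact ih (Or.inl (nbr_unique T hv hac hwv.symm))

private lemma leaf_good_nbr (hT : T.IsTree) (h5 : 5 ≤ Fintype.card V) {w : V}
    (hw : T.degree w ≤ 1) : ∃ v, T.Adj w v ∧ 2 ≤ T.degree v := by
  obtain ⟨v, hv⟩ := exists_adj T hT (by omega) w
  refine ⟨v, hv, ?_⟩
  by_contra hd
  push_neg at hd
  have h1 : T.degree v ≤ 1 := by omega
  have hall : ∀ x : V, x = w ∨ x = v := by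
    intro x
    obtain ⟨p⟩ := hT.isConnected.preconnected w x
    exact closed_pair T hw h1 hv p (Or.inl rfl)
  have hle : Fintype.card V ≤ 2 := by
    classical
    have hsub : (Finset.univ : Finset V) ⊆ {w, v} := by
      intro x _
      rcases hall x with rfl | rfl <;> simp
    calc Fintype.card V = (Finset.univ : Finset V).card := rfl
      _ ≤ ({w, v} : Finset V).card := Finset.card_le_card hsub
      _ ≤ 2 := (Finset.card_insert_le _ _).trans (by simp)
  omega

end GraphLemmas

private lemma prime_dvd_24 {p : ℕ} (hp : p.Prime) (h : p ∣ 24) : p = 2 ∨ p = 3 := by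
  have h2 := hp.two_le
  have hle := Nat.le_of_dvd (by norm_num) h
  interval_cases p <;> revert h <;> revert hp <;> decide

private lemma base_case {V : Type*} [Fintype V] (T : SimpleGraph V) (h4 : Fintype.card V ≤ 4) :
    Group.IsSolvable ↥(graphAut T) ∧
      ∀ p : ℕ, p.Prime → p ∣ Nat.card ↥(graphAut T) → p = 2 ∨ p = 3 := by
  classical
  haveI := perm_solvable (X := V) h4
  refine ⟨inferInstance, ?_⟩
  intro p hp hd
  exact prime_dvd_24 hp (hd.trans ((Subgroup.card_subgroup_dvd_card _).trans (perm_card_dvd h4)))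

universe u

private lemma main_aux (n : ℕ) : ∀ {V : Type u} [Fintype V] (T : SimpleGraph V)
    [DecidableRel T.Adj], Fintype.card V ≤ n → T.IsTree → (∀ v, T.degree v ≤ 4) →
    Group.IsSolvable ↥(graphAut T) ∧
      ∀ p : ℕ, p.Prime → p ∣ Nat.card ↥(graphAut T) → p = 2 ∨ p = 3 := by
  induction n with
  | zero =>
    intro V _ T _ hcard _ _
    exact base_case T (by omega)
  | succ n ih =>
    intro V _ T _ hcard hT hdeg
    by_cases hbase : Fintype.card V ≤ 4
    · exact base_case T hbase
    push_neg at hbase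
    classical
    set S : Set V := {v | 2 ≤ T.degree v} with hSdef
    haveI hadjdec : DecidableRel (T.induce S).Adj := fun a b =>
      (inferInstance : Decidable (T.Adj a.1 b.1))
    -- S is nonempty
    have hSne : ∃ v, v ∈ S := by
      by_contra hno
      push_neg at hno
      have hall : ∀ v, T.degree v ≤ 1 := by
        intro v
        have hv := hno v
        simp only [hSdef, Set.mem_setOf_eq] at hv
        omega
      have hsum := T.sum_degrees_eq_twice_card_edges
      have hedge := hT.card_edgeFinset
      have hle : ∑ v, T.degree v ≤ Fintype.card V := by
        calc ∑ v, T.degree v ≤ ∑ _v : V, 1 := Finset.sum_le_sum (fun v _ => hall v)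
          _ = Fintype.card V := by simp
      omega
    -- a leaf exists
    obtain ⟨w0, hw0⟩ := exists_small_degree T hT
    have hw0S : w0 ∉ S := by
      simp only [hSdef, Set.mem_setOf_eq]
      omega
    have hcardS : Fintype.card ↥S ≤ n := by
      have h1 := Fintype.card_subtype_lt (p := (· ∈ S)) hw0S
      have h2 : Fintype.card {y // (fun x => x ∈ S) y} = Fintype.card ↥S :=
        Fintype.card_congr (Equiv.refl _)
      exact Nat.lt_succ_iff.mp (lt_of_eq_of_lt (Fintype.card_congr (Equiv.refl _)) (h1.trans_le hcard))
    -- the induced graph is a tree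
    have hT' : (T.induce S).IsTree := by
      constructor
      · rw [connected_iff]
        refine ⟨?_, ?_⟩
        · intro u v
          obtain ⟨p, hp⟩ := (hT.existsUnique_path u.1 v.1).exists
          have hsupp : ∀ x ∈ p.support, x ∈ S := by
            intro x hx
            rcases support_mem_S T p v.2 hp x hx with rfl | h2
            · exact u.2
            · exact h2
          exact reachable_induce T p hsupp u.2 v.2
        · obtain ⟨v, hv⟩ := hSne
          exact ⟨⟨v, hv⟩⟩
      · intro v c hc
        have hinj : Function.Injective ⇑((SimpleGraph.Embedding.induce (G := T) S).toHom) :=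
          fun a b h => Subtype.ext h
        exact hT.2 _ ((Walk.map_isCycle_iff_of_injective hinj).2 hc)
    -- degrees in the induced graph
    have hdeg' : ∀ v : ↥S, (T.induce S).degree v ≤ 4 := by
      intro v
      have hinj : Function.Injective (fun (w : ((T.induce S).neighborSet v)) =>
          (⟨w.1.1, w.2⟩ : T.neighborSet v.1)) := by
        intro a b hab
        have h1 : (a.1 : ↥S).1 = (b.1 : ↥S).1 :=
          congrArg (fun z : T.neighborSet v.1 => z.1) hab
        exact Subtype.ext (Subtype.ext h1)
      have hle := Fintype.card_le_of_injective _ hinj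
      rw [card_neighborSet_eq_degree, card_neighborSet_eq_degree] at hle
      exact hle.trans (hdeg v.1)
    -- the restriction homomorphism
    have hpres : ∀ (g : ↥(graphAut T)) (x : V), x ∈ S ↔ (g.1 : Equiv.Perm V) x ∈ S := by
      intro g x
      simp only [hSdef, Set.mem_setOf_eq]
      rw [aut_degree_eq T g.1 g.2 x]
    let ψ : ↥(graphAut T) →* ↥(graphAut (T.induce S)) := {
      toFun := fun g => ⟨Equiv.Perm.subtypePerm g.1 (fun x => (hpres g x).symm), fun u v => g.2 u.1 v.1⟩
      map_one' := rfl
      map_mul' := fun a b => rfl }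
    have hker_fix : ∀ (g : ↥ψ.ker) (x : V), x ∈ S → ((g.1.1 : Equiv.Perm V) x = x) := by
      intro g x hx
      have h1 : ψ g.1 = 1 := g.2
      have h2 := congrArg (fun (z : ↥(graphAut (T.induce S))) =>
        ((z.1 : Equiv.Perm ↥S) ⟨x, hx⟩ : ↥S)) h1
      exact congrArg Subtype.val h2
    have hnbiff : ∀ (g : ↥ψ.ker) (v : ↥S) (x : V),
        T.Adj v.1 x ↔ T.Adj v.1 ((g.1.1 : Equiv.Perm V) x) := by
      intro g v x
      have hfix := hker_fix g v.1 v.2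
      constructor
      · intro h
        have := (g.1.2 v.1 x).2 h
        rwa [hfix] at this
      · intro h
        have h2 : T.Adj ((g.1.1 : Equiv.Perm V) v.1) ((g.1.1 : Equiv.Perm V) x) := by
          rwa [hfix]
        exact (g.1.2 v.1 x).1 h2
    let Φ : ↥ψ.ker →* (∀ v : ↥S, Equiv.Perm {w : V // T.Adj v.1 w}) := {
      toFun := fun g v => Equiv.Perm.subtypePerm g.1.1 (fun x => (hnbiff g v x).symm)
      map_one' := rfl
      map_mul' := fun a b => rfl }
    have hΦinj : Function.Injective Φ := by
      intro g h hgh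
      apply Subtype.ext
      apply Subtype.ext
      apply Equiv.ext
      intro x
      by_cases hx : x ∈ S
      · rw [hker_fix g x hx, hker_fix h x hx]
      · have hxdeg : T.degree x ≤ 1 := by
          simp only [hSdef, Set.mem_setOf_eq] at hx
          omega
        obtain ⟨v, hv, hv2⟩ := leaf_good_nbr T hT (by omega) hxdeg
        have hveq := congrFun hgh ⟨v, hv2⟩
        have := congrArg (fun (σ : Equiv.Perm {w : V // T.Adj v w}) =>
          ((σ ⟨x, hv.symm⟩ : {w : V // T.Adj v w}) : V)) hveq
        exact this
    -- solvability of the kernel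
    have hcard4 : ∀ v : ↥S, Fintype.card {w : V // T.Adj v.1 w} ≤ 4 := by
      intro v
      have : Fintype.card {w : V // T.Adj v.1 w} = T.degree v.1 := by
        rw [← card_neighborSet_eq_degree]
        exact Fintype.card_congr (Equiv.subtypeEquivRight (fun _ => Iff.rfl))
      rw [this]
      exact hdeg v.1
    haveI hpermsolv : ∀ v : ↥S, Group.IsSolvable (Equiv.Perm {w : V // T.Adj v.1 w}) := fun v =>
      perm_solvable (hcard4 v)
    haveI hpisolv : Group.IsSolvable (∀ v : ↥S, Equiv.Perm {w : V // T.Adj v.1 w}) :=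
      pi_solvable _
    haveI hkersolv : Group.IsSolvable ↥ψ.ker := solvable_of_solvable_injective hΦinj
    -- induction hypothesis for the induced graph
    obtain ⟨ihsolv, ihprime⟩ := ih (T.induce S) hcardS hT' hdeg'
    haveI := ihsolv
    constructor
    · exact solvable_of_ker_le_range ψ.ker.subtype ψ (le_of_eq (Subgroup.range_subtype _).symm)
    · intro p hp hd
      have hcardeq : Nat.card ↥(graphAut T) =
          Nat.card (↥(graphAut T) ⧸ ψ.ker) * Nat.card ↥ψ.ker :=
        Subgroup.card_eq_card_quotient_mul_card_subgroup _
      rw [hcardeq] at hd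
      rcases (Nat.Prime.dvd_mul hp).1 hd with hq | hk
      · have hqr : Nat.card (↥(graphAut T) ⧸ ψ.ker) = Nat.card ψ.range :=
          Nat.card_congr (QuotientGroup.quotientKerEquivRange ψ).toEquiv
        rw [hqr] at hq
        exact ihprime p hp (hq.trans (Subgroup.card_subgroup_dvd_card ψ.range))
      · have hdvd : Nat.card ↥ψ.ker ∣
            Nat.card (∀ v : ↥S, Equiv.Perm {w : V // T.Adj v.1 w}) :=
          Subgroup.card_dvd_of_injective Φ hΦinj
        rw [Nat.card_pi] at hdvd
        obtain ⟨v, -, hv⟩ := Prime.exists_mem_finset_dvd hp.prime (hk.trans hdvd)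
        exact prime_dvd_24 hp (hv.trans (perm_card_dvd (hcard4 v)))

/-- The automorphism group of a finite tree in which every vertex
has degree at most 4 is a solvable group of order `2^j · 3^k` for some `j, k`. -/
theorem stmt_7 {V : Type*} [Fintype V] (T : SimpleGraph V) [DecidableRel T.Adj]
    (hT : T.IsTree) (hdeg : ∀ v : V, T.degree v ≤ 4) :
    IsSolvable ↥(graphAut T) ∧ ∃ j k : ℕ, Nat.card ↥(graphAut T) = 2 ^ j * 3 ^ k := by
  obtain ⟨hs, hq⟩ := main_aux (Fintype.card V) T le_rfl hT hdeg
  refine ⟨hs, two_three_pow _ ?_ hq⟩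
  haveI : Finite ↥(graphAut T) := by
    classical
    infer_instance
  have := Nat.card_pos (α := ↥(graphAut T))
  omega
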